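/- Let S = {b_1,...,b_m} with m = 3k positive integers summing to kT, and suppose [m] partitions into k disjoint subsets S_1,...,S_k each with b-sum T. In the (k+1)-agent instance with goods g_1,...,g_m, d_1, d_2, where agent 0 values each g_j at (2m/3)T, d_1 at T, d_2 at (m/3 - 1)T, and each agent i in [k] values g_j at b_j and d_1, d_2 at (m^2/3)T each: for each 0 <= i <= k define the allocation A^i that gives agent j the goods indexed by S_j for each j in [k], gives d_1 to agent 0, and gives d_2 to agent i. Then each A^i is an EQ1 allocation. -/

import Mathlib

open Finset

/-- An allocation is a partition of the goods among the agents. -/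
def isPartition {ι γ : Type*} [Fintype ι] [Fintype γ] [DecidableEq γ]
    (A : ι → Finset γ) : Prop :=
  (∀ i j, i ≠ j → Disjoint (A i) (A j)) ∧ Finset.univ.biUnion A = Finset.univ

/-- Additive value of a bundle. -/
def bundleVal {γ : Type*} (v : γ → ℚ) (S : Finset γ) : ℚ := ∑ g ∈ S, v g

/-- EQ1: for every pair of agents `i, j` with `A i` nonempty, some good can be
removed from `A i` so that `i`'s value drops to at most `j`'s value. -/
def EQ1 {ι γ : Type*} [DecidableEq γ] (v : ι → γ → ℚ) (A : ι → Finset γ) : Prop :=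
  ∀ i j, A i ≠ ∅ → ∃ g ∈ A i, bundleVal (v i) ((A i).erase g) ≤ bundleVal (v j) (A j)

/-- Valuations of the strong-NP-hardness reduction (with `m = 3k`): agent 0 is
`none`, agents `1, …, k` are `some i`; goods are `g_1, …, g_m` (`Sum.inl`) plus
`d_1 = Sum.inr 0` and `d_2 = Sum.inr 1`.  Agent 0 values each `g_j` at
`(2m/3)T = 2kT`, `d_1` at `T` and `d_2` at `(m/3 - 1)T = (k-1)T`; each agent
`i ∈ [k]` values `g_j` at `b_j` and `d_1, d_2` at `(m²/3)T = 3k²T`. -/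
def vStrong (k : ℕ) (T : ℤ) (b : Fin (3 * k) → ℤ) :
    Option (Fin k) → (Fin (3 * k) ⊕ Fin 2) → ℚ :=
  fun i g =>
    match i, g with
    | none, Sum.inl _ => 2 * (k : ℚ) * (T : ℚ)
    | none, Sum.inr 0 => (T : ℚ)
    | none, Sum.inr 1 => ((k : ℚ) - 1) * (T : ℚ)
    | some _, Sum.inl j => (b j : ℚ)
    | some _, Sum.inr _ => 3 * (k : ℚ) ^ 2 * (T : ℚ)

/-- The allocation `A^i`: each agent `j ∈ [k]` gets the goods indexed by
`S j`, agent 0 gets `d₁`, and agent `i` additionally gets `d₂`. -/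
def strongAlloc {k : ℕ} (S : Fin k → Finset (Fin (3 * k))) (i : Option (Fin k)) :
    Option (Fin k) → Finset (Fin (3 * k) ⊕ Fin 2) :=
  fun a =>
    (match a with
      | none => {Sum.inr 0}
      | some j => (S j).image Sum.inl) ∪ (if a = i then {Sum.inr 1} else ∅)

lemma val_image {k : ℕ} (T : ℤ) (b : Fin (3 * k) → ℤ) (i0 : Fin k)
    (s : Finset (Fin (3 * k))) :
    bundleVal (vStrong k T b (some i0)) (s.image Sum.inl) = ((∑ x ∈ s, b x : ℤ) : ℚ) := by
  rw [bundleVal, Finset.sum_image (fun _ _ _ _ h => Sum.inl.inj h)]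
  push_cast
  rfl

/-- in a `yes` instance of 3-partition, each allocation `A^i` is
an EQ1 allocation. -/
theorem stmt6 (k : ℕ) (hk : 0 < k) (T : ℤ) (b : Fin (3 * k) → ℤ)
    (hb : ∀ i, 0 < b i) (hsum : ∑ i, b i = k * T)
    (S : Fin k → Finset (Fin (3 * k)))
    (hdisj : ∀ j j', j ≠ j' → Disjoint (S j) (S j'))
    (hcover : Finset.univ.biUnion S = Finset.univ)
    (hS : ∀ j, ∑ i ∈ S j, b i = T) :
    ∀ i : Option (Fin k),
      isPartition (strongAlloc S i) ∧ EQ1 (vStrong k T b) (strongAlloc S i) := by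
  have hT : (0:ℤ) < T := by
    have h1 : (0:ℤ) < ∑ i, b i := by
      apply Finset.sum_pos (fun i _ => hb i)
      exact ⟨⟨0, by omega⟩, Finset.mem_univ _⟩
    rw [hsum] at h1
    nlinarith [Int.natCast_pos.mpr hk]
  have hTQ : (0:ℚ) < (T:ℚ) := by exact_mod_cast hT
  have hkQ : (1:ℚ) ≤ (k:ℚ) := by exact_mod_cast hk
  have hSne : ∀ j, (S j).Nonempty := by
    intro j
    rcases Finset.eq_empty_or_nonempty (S j) with h | h
    · exfalso; have := hS j; rw [h] at this; simp at this; omega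
    · exact h
  intro i
  -- value of agent j on image of S j
  have hval : ∀ (i0 j : Fin k),
      bundleVal (vStrong k T b (some i0)) ((S j).image Sum.inl) = (T:ℚ) := by
    intro i0 j; rw [val_image, hS]
  -- every agent values its own bundle at least T
  have htarget : ∀ a', (T:ℚ) ≤ bundleVal (vStrong k T b a') (strongAlloc S i a') := by
    intro a'
    cases a' with
    | none =>
      by_cases h : (none : Option (Fin k)) = i
      · subst h
        rw [show strongAlloc S none none = ({Sum.inr 0, Sum.inr 1} : Finset (Fin (3*k) ⊕ Fin 2)) by
          show ({Sum.inr 0} : Finset (Fin (3*k) ⊕ Fin 2)) ∪ (if (none : Option (Fin k)) = none then {Sum.inr 1} else ∅) = _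
          rw [if_pos rfl, ← Finset.insert_eq]]
        rw [bundleVal, Finset.sum_pair (by simp)]
        show (T:ℚ) ≤ (T:ℚ) + ((k:ℚ) - 1) * (T:ℚ)
        nlinarith
      · simp only [strongAlloc, if_neg h, Finset.union_empty]
        rw [bundleVal, Finset.sum_singleton]
        exact le_refl _
    | some j =>
      by_cases h : (some j : Option (Fin k)) = i
      · simp only [strongAlloc, if_pos h]
        rw [bundleVal, Finset.sum_union (by simp)]
        rw [← bundleVal, hval, Finset.sum_singleton]
        show (T:ℚ) ≤ (T:ℚ) + 3 * (k:ℚ)^2 * (T:ℚ)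
        nlinarith
      · simp only [strongAlloc, if_neg h, Finset.union_empty]
        rw [hval]
  constructor
  · constructor
    · intro a a' hne
      rw [Finset.disjoint_left]
      intro x hx hx'
      cases a <;> cases a' <;>
        simp only [strongAlloc, Finset.mem_union, Finset.mem_singleton,
          Finset.mem_image] at hx hx' <;>
        [skip; skip; skip; skip]
      · exact hne rfl
      · -- a = none, a' = some j
        rcases hx with h1 | h1
        · rcases hx' with h2 | h2
          · obtain ⟨y, _, h2⟩ := h2; rw [← h2] at h1; exact absurd h1 (by simp)
          · split at h2
            · simp only [Finset.mem_singleton] at h2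
              rw [h1] at h2; exact absurd h2 (by simp)
            · simp at h2
        · split at h1
          · simp only [Finset.mem_singleton] at h1
            rcases hx' with h2 | h2
            · obtain ⟨y, _, h2⟩ := h2; rw [← h2] at h1; exact absurd h1 (by simp)
            · split at h2
              · simp only [Finset.mem_singleton] at h2
                rename_i hi1 hi2
                exact hne (hi1.trans hi2.symm)
              · simp at h2
          · simp at h1
      · -- a = some j, a' = none : symmetric
        rcases hx with h1 | h1
        · rcases hx' with h2 | h2
          · obtain ⟨y, _, h1⟩ := h1; rw [← h1] at h2; exact absurd h2 (by simp)
          · split at h2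
            · simp only [Finset.mem_singleton] at h2
              obtain ⟨y, _, h1⟩ := h1; rw [← h1] at h2; exact absurd h2 (by simp)
            · simp at h2
        · split at h1
          · simp only [Finset.mem_singleton] at h1
            rcases hx' with h2 | h2
            · rw [h1] at h2; exact absurd h2 (by simp)
            · split at h2
              · simp only [Finset.mem_singleton] at h2
                rename_i hi1 hi2
                exact hne (hi1.trans hi2.symm)
              · simp at h2
          · simp at h1
      · -- a = some j, a' = some j'
        rename_i j j'
        have hjj : j ≠ j' := fun h => hne (by rw [h])
        rcases hx with h1 | h1
        · rcases hx' with h2 | h2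
          · obtain ⟨y, hy, h1⟩ := h1; obtain ⟨y', hy', h2⟩ := h2
            rw [← h1] at h2
            have : y' = y := Sum.inl.inj h2
            subst this
            exact Finset.disjoint_left.mp (hdisj j j' hjj) hy hy'
          · split at h2
            · simp only [Finset.mem_singleton] at h2
              obtain ⟨y, _, h1⟩ := h1; rw [← h1] at h2; exact absurd h2 (by simp)
            · simp at h2
        · split at h1
          · simp only [Finset.mem_singleton] at h1
            rcases hx' with h2 | h2
            · obtain ⟨y, _, h2⟩ := h2; rw [← h2] at h1; exact absurd h1 (by simp)
            · split at h2
              · simp only [Finset.mem_singleton] at h2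
                rename_i hi1 hi2
                exact hne (hi1.trans hi2.symm)
              · simp at h2
          · simp at h1
    · rw [Finset.eq_univ_iff_forall]
      intro x
      rw [Finset.mem_biUnion]
      cases x with
      | inl g =>
        have : g ∈ Finset.univ.biUnion S := by rw [hcover]; exact Finset.mem_univ _
        obtain ⟨j, _, hj⟩ := Finset.mem_biUnion.mp this
        exact ⟨some j, Finset.mem_univ _,
          Finset.mem_union_left _ (Finset.mem_image_of_mem _ hj)⟩
      | inr d =>
        fin_cases d
        · exact ⟨none, Finset.mem_univ _, Finset.mem_union_left _ (by simp)⟩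
        · exact ⟨i, Finset.mem_univ _, by
            cases i <;> exact Finset.mem_union_right _ (by simp)⟩
  · -- EQ1
    intro a a' _
    cases a with
    | none =>
      by_cases h : (none : Option (Fin k)) = i
      · refine ⟨Sum.inr 1, ?_, ?_⟩
        · simp [strongAlloc, ← h]
        · have hb1 : strongAlloc S i none = {Sum.inr 0, Sum.inr 1} := by
            simp [strongAlloc, ← h]
          rw [hb1]
          have herase : ({Sum.inr 0, Sum.inr 1} : Finset (Fin (3*k) ⊕ Fin 2)).erase (Sum.inr 1)
              = {Sum.inr 0} := by
            rw [Finset.pair_comm]; exact Finset.erase_insert (by simp)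
          rw [herase, bundleVal, Finset.sum_singleton]
          exact htarget a'
      · refine ⟨Sum.inr 0, ?_, ?_⟩
        · simp [strongAlloc, h]
        · have hb1 : strongAlloc S i none = {Sum.inr 0} := by
            simp [strongAlloc, h]
          rw [hb1, Finset.erase_singleton, bundleVal, Finset.sum_empty]
          exact le_trans hTQ.le (htarget a')
    | some j =>
      by_cases h : (some j : Option (Fin k)) = i
      · refine ⟨Sum.inr 1, ?_, ?_⟩
        · simp [strongAlloc, h]
        · have hb1 : strongAlloc S i (some j) = (S j).image Sum.inl ∪ {Sum.inr 1} := by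
            simp [strongAlloc, h]
          rw [hb1]
          have he : ((S j).image Sum.inl ∪ {Sum.inr 1} : Finset (Fin (3*k) ⊕ Fin 2)).erase (Sum.inr 1)
              = (S j).image Sum.inl := by
            rw [Finset.union_comm, ← Finset.insert_eq, Finset.erase_insert (by simp)]
          rw [he, hval]
          exact htarget a'
      · obtain ⟨g, hg⟩ := hSne j
        have hb1 : strongAlloc S i (some j) = (S j).image Sum.inl := by
          simp [strongAlloc, h]
        refine ⟨Sum.inl g, ?_, ?_⟩
        · rw [hb1]; exact Finset.mem_image_of_mem _ hg
        · rw [hb1]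
          have he : ((S j).image Sum.inl : Finset (Fin (3*k) ⊕ Fin 2)).erase (Sum.inl g)
              = ((S j).erase g).image Sum.inl := by
            rw [Finset.image_erase (fun _ _ h => Sum.inl.inj h)]
          rw [he, val_image]
          rw [Finset.sum_erase_eq_sub hg, hS]
          have hbg : (0:ℚ) < ((b g : ℤ) : ℚ) := by exact_mod_cast hb g
          have := htarget a'
          push_cast
          push_cast at this ⊢
          linarith
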